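/- Let P = v_1…v_k be a path and let b ∈ [0,B]. Then α_b(P) ≥ 0 if and only if g(v_1…v_j) ≥ −b for every 1 ≤ j ≤ k and g(v_{j_1}…v_{j_2}) ≥ −B for every 1 ≤ j_1 ≤ j_2 ≤ k. -/
import Mathlib


open Finset

namespace EV

noncomputable section

/-- Charge after traversing `i` arcs of a path with arc gains `g`, battery capacity `B`,
initial charge `b`. -/
def charge (B b : ℝ) (g : ℕ → ℝ) : ℕ → ℝ
  | 0 => b
  | i + 1 => min (charge B b g i + g i) B

/-- The traversal of the path with `n` arcs is feasible from initial charge `b`. -/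
def Feasible (B b : ℝ) (g : ℕ → ℝ) (n : ℕ) : Prop :=
  ∀ i < n, 0 ≤ charge B b g i + g i

open Classical in
/-- Maximum final charge `α_b(P)` for a path `P` with `n` arc gains `g`,
as an extended real (`⊥ = -∞` if the traversal is infeasible). -/
def alpha (B b : ℝ) (g : ℕ → ℝ) (n : ℕ) : EReal :=
  if Feasible B b g n then ((charge B b g n : ℝ) : EReal) else ⊥

/-- Gain of the `i`-th vertex (0-indexed): the sum of the first `i` arc gains. -/
def vGain (g : ℕ → ℝ) (i : ℕ) : ℝ := ∑ t ∈ Finset.range i, g t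

/-- `P` is traversable: `α_B(P) ≥ 0`, i.e. feasible from a full battery. -/
def Traversable (B : ℝ) (g : ℕ → ℝ) (n : ℕ) : Prop := Feasible B B g n

/-- `C` is a charge drop schedule for a path with `n` arcs (vertices `0,…,n`):
no drop at the first vertex, all drops nonnegative. -/
def Schedule (C : ℕ → ℝ) (n : ℕ) : Prop := C 0 = 0 ∧ ∀ i ≤ n, 0 ≤ C i

/-- Gain of vertex `i` with respect to the charge drop schedule `C`. -/
def cGain (g C : ℕ → ℝ) (i : ℕ) : ℝ := vGain g i - ∑ t ∈ Finset.range (i + 1), C t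

/-- `P` (with `n` arcs) is ascending with respect to the schedule `C`. -/
def AscendingC (B : ℝ) (g C : ℕ → ℝ) (n : ℕ) : Prop :=
  Traversable B g n ∧ ∀ i ≤ n, 0 ≤ cGain g C i ∧ cGain g C i ≤ cGain g C n

/-- `P` (with `n` arcs) is descending with respect to the schedule `C`. -/
def DescendingC (B : ℝ) (g C : ℕ → ℝ) (n : ℕ) : Prop :=
  Traversable B g n ∧ ∀ i ≤ n, cGain g C n ≤ cGain g C i ∧ cGain g C i ≤ 0

/-- `P` is monotone with respect to the schedule `C`. -/
def MonotoneC (B : ℝ) (g C : ℕ → ℝ) (n : ℕ) : Prop :=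
  AscendingC B g C n ∨ DescendingC B g C n

/-- Ascending with respect to the zero schedule. -/
def Ascending (B : ℝ) (g : ℕ → ℝ) (n : ℕ) : Prop := AscendingC B g (fun _ => 0) n

/-- Descending with respect to the zero schedule. -/
def Descending (B : ℝ) (g : ℕ → ℝ) (n : ℕ) : Prop := DescendingC B g (fun _ => 0) n

/-- Monotone with respect to the zero schedule. -/
def MonotonePath (B : ℝ) (g : ℕ → ℝ) (n : ℕ) : Prop := Ascending B g n ∨ Descending B g n

/-- The contiguous subpath whose arcs start at arc index `a`. -/
def SubPath (g : ℕ → ℝ) (a : ℕ) : ℕ → ℝ := fun t => g (a + t)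

/-- Restriction of a charge drop schedule to the subpath starting at vertex `a`:
no drop at the subpath's first vertex. -/
def restrict (C : ℕ → ℝ) (a : ℕ) : ℕ → ℝ := fun t => if t = 0 then 0 else C (a + t)

/-- First-arc-bounded with respect to a schedule `C` (no drop at the second vertex,
and all vertex gains lie between the gains of the first two vertices). -/
def FirstArcBoundedC (g C : ℕ → ℝ) (n : ℕ) : Prop :=
  C 1 = 0 ∧
    ((0 ≤ g 0 ∧ ∀ i ≤ n, 0 ≤ cGain g C i ∧ cGain g C i ≤ g 0) ∨
     (g 0 ≤ 0 ∧ ∀ i ≤ n, g 0 ≤ cGain g C i ∧ cGain g C i ≤ 0))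

/-- Last-arc-bounded with respect to a schedule `C` (no drops at the last two vertices,
and all vertex gains lie between the gains of the last two vertices). -/
def LastArcBoundedC (g C : ℕ → ℝ) (n : ℕ) : Prop :=
  C (n - 1) = 0 ∧ C n = 0 ∧
    ((0 ≤ g (n - 1) ∧ ∀ i ≤ n, cGain g C (n - 1) ≤ cGain g C i ∧ cGain g C i ≤ cGain g C n) ∨
     (g (n - 1) < 0 ∧ ∀ i ≤ n, cGain g C n ≤ cGain g C i ∧ cGain g C i ≤ cGain g C (n - 1)))

/-- First-arc-bounded (zero schedule). -/
def FirstArcBounded (g : ℕ → ℝ) (n : ℕ) : Prop := FirstArcBoundedC g (fun _ => 0) n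

/-- Last-arc-bounded (zero schedule). -/
def LastArcBounded (g : ℕ → ℝ) (n : ℕ) : Prop := LastArcBoundedC g (fun _ => 0) n

/-- Arc-bounded: first- or last-arc-bounded. -/
def ArcBounded (g : ℕ → ℝ) (n : ℕ) : Prop := FirstArcBounded g n ∨ LastArcBounded g n

/-- A funnel: arc-bounded and containing no monotone subpath of 2 or 3 consecutive arcs. -/
def Funnel (B : ℝ) (g : ℕ → ℝ) (n : ℕ) : Prop :=
  ArcBounded g n ∧ ∀ a m, (m = 2 ∨ m = 3) → a + m ≤ n → ¬ MonotonePath B (SubPath g a) m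

/-- `j = s̄(i)`: the maximal index `j ≥ i` (among arcs of a path with `n` arcs) such that
the subpath of arcs `i,…,j` is first-arc-bounded. -/
def IsSbar (g : ℕ → ℝ) (n i j : ℕ) : Prop :=
  i ≤ j ∧ j < n ∧ FirstArcBounded (SubPath g i) (j - i + 1) ∧
    ∀ j', i ≤ j' → j' < n → FirstArcBounded (SubPath g i) (j' - i + 1) → j' ≤ j

/-- `j = s̲(i)`: the minimal index `j ≤ i` such that the subpath of arcs `j,…,i`
is last-arc-bounded. -/
def IsSlow (g : ℕ → ℝ) (n i j : ℕ) : Prop :=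
  j ≤ i ∧ i < n ∧ LastArcBounded (SubPath g j) (i - j + 1) ∧
    ∀ j', j' ≤ i → LastArcBounded (SubPath g j') (i - j' + 1) → j ≤ j'

/-- Arc gains of the walk around a cycle with `m` arc gains `g`, starting at vertex `a`. -/
def cyc (g : ℕ → ℝ) (m a : ℕ) : ℕ → ℝ := fun t => g ((a + t) % m)

/-- A walk of length `ℓ` from `x` to `y` in the directed graph with arc relation `A`. -/
def IsWalk {V : Type*} (A : V → V → Prop) (w : ℕ → V) (ℓ : ℕ) (x y : V) : Prop :=
  w 0 = x ∧ w ℓ = y ∧ ∀ t < ℓ, A (w t) (w (t + 1))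

/-- The sequence of arc gains induced by a walk `w` in a graph with gain function `g`. -/
def walkGains {V : Type*} (g : V → V → ℝ) (w : ℕ → V) : ℕ → ℝ :=
  fun t => g (w t) (w (t + 1))

lemma vGain_succ (g : ℕ → ℝ) (i : ℕ) : vGain g (i + 1) = vGain g i + g i := by
  simp [vGain, Finset.sum_range_succ]

lemma charge_le (B b : ℝ) (g : ℕ → ℝ) (i : ℕ) :
    charge B b g i ≤ b + vGain g i := by
  induction i with
  | zero => simp [charge, vGain]
  | succ i ih =>
    have h1 : charge B b g (i + 1) ≤ charge B b g i + g i := min_le_left _ _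
    rw [vGain_succ]; linarith

lemma charge_le_B (B b : ℝ) (hbB : b ≤ B) (g : ℕ → ℝ) (i : ℕ) :
    charge B b g i ≤ B := by
  cases i with
  | zero => exact hbB
  | succ i => exact min_le_right _ _

lemma charge_le_of_le (B b : ℝ) (g : ℕ → ℝ) {j i : ℕ} (h : j ≤ i) :
    charge B b g i ≤ charge B b g j + (vGain g i - vGain g j) := by
  induction i with
  | zero => interval_cases j; simp
  | succ i ih =>
    rcases Nat.eq_or_lt_of_le h with rfl | h'
    · simp
    · have hj : j ≤ i := Nat.lt_succ_iff.mp h'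
      have h1 : charge B b g (i + 1) ≤ charge B b g i + g i := min_le_left _ _
      have := ih hj
      rw [vGain_succ]; linarith

lemma charge_rep (B b : ℝ) (g : ℕ → ℝ) (i : ℕ) :
    ∃ j ≤ i, charge B b g i =
      (if j = 0 then b + vGain g i else B + (vGain g i - vGain g j)) := by
  induction i with
  | zero => exact ⟨0, le_rfl, by simp [charge, vGain]⟩
  | succ i ih =>
    obtain ⟨j, hj, hrep⟩ := ih
    by_cases h : charge B b g i + g i ≤ B
    · refine ⟨j, hj.trans (Nat.le_succ i), ?_⟩
      have hc : charge B b g (i + 1) = charge B b g i + g i := min_eq_left h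
      rw [hc, hrep, vGain_succ]
      split <;> ring
    · refine ⟨i + 1, le_rfl, ?_⟩
      have hc : charge B b g (i + 1) = B := min_eq_right (le_of_not_ge h)
      simp [hc]

/-- `α_b(P) ≥ 0` iff every prefix gain is at least `-b` and every
contiguous subpath has gain at least `-B`. -/
theorem alpha_nonneg_iff (B : ℝ) (hB : 0 < B) (b : ℝ) (hb0 : 0 ≤ b) (hbB : b ≤ B)
    (g : ℕ → ℝ) (n : ℕ) :
    (0 : EReal) ≤ alpha B b g n ↔
      ((∀ j ≤ n, -b ≤ vGain g j) ∧
        ∀ j₁ j₂, j₁ ≤ j₂ → j₂ ≤ n → -B ≤ vGain g j₂ - vGain g j₁) := by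
  have key : (0 : EReal) ≤ alpha B b g n ↔ Feasible B b g n ∧ 0 ≤ charge B b g n := by
    unfold alpha
    split
    · rename_i hf
      constructor
      · intro h; exact ⟨hf, by exact_mod_cast h⟩
      · intro h; exact_mod_cast h.2
    · rename_i hf
      constructor
      · intro h; exact absurd h (by simp)
      · rintro ⟨h, -⟩; exact (hf h).elim
  have key2 : (Feasible B b g n ∧ 0 ≤ charge B b g n) ↔ ∀ i ≤ n, 0 ≤ charge B b g i := by
    constructor
    · rintro ⟨hf, hn⟩ i hi
      cases i with
      | zero => exact hb0
      | succ i =>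
        have h1 : 0 ≤ charge B b g i + g i := hf i (Nat.lt_of_succ_le hi)
        exact le_min h1 hB.le
    · intro hall
      refine ⟨fun i hi => ?_, hall n le_rfl⟩
      have h1 : 0 ≤ charge B b g (i + 1) := hall (i + 1) hi
      exact h1.trans (min_le_left _ _)
  rw [key, key2]
  constructor
  · intro hall
    constructor
    · intro j hj
      have := (hall j hj).trans (charge_le B b g j)
      linarith
    · intro j₁ j₂ h12 h2n
      rcases Nat.eq_zero_or_pos j₁ with rfl | hpos
      · have := (hall j₂ h2n).trans (charge_le B b g j₂)
        simp only [vGain, Finset.range_zero, Finset.sum_empty] at *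
        linarith
      · have h1 : 0 ≤ charge B b g j₂ := hall j₂ h2n
        have h2 : charge B b g j₂ ≤ charge B b g j₁ + (vGain g j₂ - vGain g j₁) :=
          charge_le_of_le B b g h12
        have h3 : charge B b g j₁ ≤ B := charge_le_B B b hbB g j₁
        linarith
  · rintro ⟨h1, h2⟩ i hi
    obtain ⟨j, hj, hrep⟩ := charge_rep B b g i
    rw [hrep]
    split
    · have := h1 i hi; linarith
    · have := h2 j i hj hi; linarith

end

end EV
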